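/- For a partition λ with no k consecutive part sizes and all parts ≤ N, if n_1 < n_2 < ⋯ are the part sizes in {1,…,N} missing from λ, and ℓ = ∑_{runs}(k − length of run) where runs are the maximal blocks of consecutive present part-sizes, then the number of missing part sizes equals ⌊(N+ℓ)/k⌋, and n_i = ki − |{j : t_j ≤ i}| where t_1 ≤ ⋯ ≤ t_ℓ records the shortenings of the runs. -/

import Mathlib

/-- For a partition with no `k` consecutive part sizes and parts `≤ N`, encoded by its
set `S ⊆ {1,…,N}` of present part sizes: let `n_1 < n_2 < ⋯ < n_M` enumerate the
missing sizes (`nn 0 = 0` and `nn i = n_i` for `1 ≤ i ≤ M`), and let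
`ℓ = ∑_{runs} (k - length of run)`, where the run before `n_i` has length
`nn i - nn (i-1)` in the counting of the paper.  Then the number `M` of missing part
sizes equals `⌊(N + ℓ)/k⌋`, and there is a nondecreasing sequence
`t_1 ≤ ⋯ ≤ t_ℓ` with values in `{0, …, M}` recording the shortenings of the runs,
such that `n_i = k i - |{j : t_j ≤ i}|`. -/
theorem stmt_19 (k N : ℕ) (hk : 2 ≤ k) (hN : 1 ≤ N)
    (S : Finset ℕ) (hS : S ⊆ Finset.Icc 1 N)
    (hnoseq : ∀ j : ℕ, 1 ≤ j → ∃ i < k, j + i ∉ S)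
    (M : ℕ) (hM : M = (Finset.Icc 1 N \ S).card)
    (nn : ℕ → ℕ) (hnn0 : nn 0 = 0)
    (hmem : ∀ i : ℕ, 1 ≤ i → i ≤ M → nn i ∈ Finset.Icc 1 N \ S)
    (hmono : StrictMonoOn nn (Set.Icc 0 M))
    (hsurj : ∀ x ∈ Finset.Icc 1 N \ S, ∃ i : ℕ, 1 ≤ i ∧ i ≤ M ∧ nn i = x) :
    M = (N + ∑ i ∈ Finset.Icc 1 M, (k - (nn i - nn (i - 1)))) / k ∧
    ∃ t : Fin (∑ i ∈ Finset.Icc 1 M, (k - (nn i - nn (i - 1)))) → ℕ,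
      Monotone t ∧ (∀ j, t j ≤ M) ∧
      ∀ i : ℕ, 1 ≤ i → i ≤ M →
        nn i = k * i - (Finset.univ.filter fun j => t j ≤ i).card := by

  have hmonoM : ∀ i j : ℕ, i ≤ j → j ≤ M → nn i ≤ nn j := by
    intro i j hij hjM
    rcases eq_or_lt_of_le hij with rfl | h
    · exact le_rfl
    · exact (hmono ⟨Nat.zero_le _, le_trans hij hjM⟩ ⟨Nat.zero_le _, hjM⟩ h).le
  have hgap : ∀ i, 1 ≤ i → i ≤ M → nn (i-1) < nn i ∧ nn i ≤ nn (i-1) + k := by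
    intro i h1 hiM
    have hlt : nn (i-1) < nn i :=
      hmono ⟨Nat.zero_le _, by omega⟩ ⟨Nat.zero_le _, hiM⟩ (by omega)
    refine ⟨hlt, ?_⟩
    by_contra h
    push_neg at h
    obtain ⟨i', hi'k, hi'S⟩ := hnoseq (nn (i-1) + 1) (by omega)
    have hNi : nn i ≤ N := (Finset.mem_Icc.mp (Finset.mem_sdiff.mp (hmem i h1 hiM)).1).2
    have hx : nn (i-1) + 1 + i' ∈ Finset.Icc 1 N \ S := by
      rw [Finset.mem_sdiff, Finset.mem_Icc]
      exact ⟨⟨by omega, by omega⟩, hi'S⟩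
    obtain ⟨j, hj1, hjM, hjx⟩ := hsurj _ hx
    have hja : i - 1 < j := by
      by_contra hc; push_neg at hc
      have := hmonoM j (i-1) hc (by omega); omega
    have hjb : j < i := by
      by_contra hc; push_neg at hc
      have := hmonoM i j hc hjM; omega
    omega
  have htop : N < nn M + k := by
    by_contra h; push_neg at h
    obtain ⟨i', hi'k, hi'S⟩ := hnoseq (nn M + 1) (Nat.le_add_left 1 _)
    have hx : nn M + 1 + i' ∈ Finset.Icc 1 N \ S := by
      rw [Finset.mem_sdiff, Finset.mem_Icc]
      exact ⟨⟨by omega, by omega⟩, hi'S⟩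
    obtain ⟨j, hj1, hjM, hjx⟩ := hsurj _ hx
    have := hmonoM j M hjM le_rfl
    omega
  have hnnMN : nn M ≤ N := by
    rcases Nat.eq_zero_or_pos M with h0 | h0
    · rw [h0, hnn0]; omega
    · exact (Finset.mem_Icc.mp (Finset.mem_sdiff.mp (hmem M h0 le_rfl)).1).2
  let L : ℕ → ℕ := fun m => ∑ i ∈ Finset.Icc 1 m, (k - (nn i - nn (i - 1)))
  have hkey : ∀ m, m ≤ M → nn m + L m = k * m := by
    intro m
    induction m with
    | zero => intro _; simp [L, hnn0]
    | succ n ih =>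
      intro h
      have ihn := ih (by omega)
      have hg := hgap (n+1) (by omega) h
      have hstep : L (n+1) = L n + (k - (nn (n+1) - nn n)) := by
        show (∑ i ∈ Finset.Icc 1 (n+1), (k - (nn i - nn (i - 1)))) = _
        rw [Finset.sum_Icc_succ_top (by omega : 1 ≤ n+1)]
        simp [L]
      simp only [Nat.add_sub_cancel] at hg
      rw [Nat.mul_succ]
      omega
  have hLmono : Monotone L := fun a b hab =>
    Finset.sum_le_sum_of_subset (Finset.Icc_subset_Icc_right hab)
  have hkM := hkey M le_rfl
  constructor
  · show M = (N + L M) / k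
    have h1 : N + L M = k * M + (N - nn M) := by omega
    rw [h1, Nat.mul_add_div (by omega : 0 < k), Nat.div_eq_of_lt (by omega)]
    omega
  · have hex : ∀ j : Fin (L M), ∃ m, (j : ℕ) < L m := fun j => ⟨M, j.isLt⟩
    refine ⟨fun j => Nat.find (hex j), ?_, ?_, ?_⟩
    · intro a b hab
      exact Nat.find_min' (hex a) (lt_of_le_of_lt hab (Nat.find_spec (hex b)))
    · intro j
      exact Nat.find_min' (hex j) j.isLt
    · intro i h1 hiM
      have hiff : ∀ j : Fin (L M), Nat.find (hex j) ≤ i ↔ (j : ℕ) < L i := by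
        intro j
        constructor
        · intro h
          exact lt_of_lt_of_le (Nat.find_spec (hex j)) (hLmono h)
        · intro h
          exact Nat.find_min' (hex j) h
      have hcard : (Finset.univ.filter fun j : Fin (L M) => Nat.find (hex j) ≤ i).card
          = L i := by
        have heq : (Finset.univ.filter fun j : Fin (L M) => Nat.find (hex j) ≤ i)
            = (Finset.range (L i)).attachFin
              (fun m hm => lt_of_lt_of_le (Finset.mem_range.mp hm) (hLmono hiM)) := by
          ext j
          simp only [Finset.mem_filter, Finset.mem_univ, true_and,
            Finset.mem_attachFin, Finset.mem_range]
          exact hiff j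
        rw [heq, Finset.card_attachFin, Finset.card_range]
      rw [hcard]
      have := hkey i hiM
      omega
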